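/- If G is a graph and v is a vertex of degree 2 with neighbors u and w, then the maximum matching size of G equals the maximum matching size of the graph G' obtained by deleting v and merging u and w into a single vertex, plus one. -/

import Mathlib

/-- A matching in a simple graph `G`, given as a finite set of edges of `G`
that are pairwise vertex-disjoint. -/
def IsMatching {V : Type*} (G : SimpleGraph V) (M : Finset (Sym2 V)) : Prop :=
  (∀ e ∈ M, e ∈ G.edgeSet) ∧
    ∀ e ∈ M, ∀ f ∈ M, e ≠ f → ∀ v, v ∈ e → v ∉ f

/-- The maximum cardinality of a matching in `G`. -/
noncomputable def mm {V : Type*} (G : SimpleGraph V) : ℕ :=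
  sSup {n | ∃ M : Finset (Sym2 V), IsMatching G M ∧ M.card = n}

/-- The graph obtained from `G` by deleting the degree-two vertex `v` and merging
its two neighbors `u` and `w` into a single vertex (represented by `u`):
the merged vertex is adjacent to every vertex other than `u, w, v` that was
adjacent to `u` or to `w`; `v` and `w` become isolated. -/
def mergeNeighbors {V : Type*} (G : SimpleGraph V) (v u w : V) : SimpleGraph V where
  Adj a b := a ≠ b ∧ a ≠ v ∧ b ≠ v ∧ a ≠ w ∧ b ≠ w ∧
    ((a = u ∧ (G.Adj u b ∨ G.Adj w b)) ∨ (b = u ∧ (G.Adj a u ∨ G.Adj a w)) ∨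
      (a ≠ u ∧ b ≠ u ∧ G.Adj a b))
  symm := by
    constructor
    rintro a b ⟨h1, h2, h3, h4, h5, h6⟩
    refine ⟨h1.symm, h3, h2, h5, h4, ?_⟩
    rcases h6 with ⟨rfl, h⟩ | ⟨rfl, h⟩ | ⟨ha, hb, h⟩
    · exact Or.inr (Or.inl ⟨rfl, by rcases h with h | h; exacts [Or.inl h.symm, Or.inr h.symm]⟩)
    · exact Or.inl ⟨rfl, by rcases h with h | h; exacts [Or.inl h.symm, Or.inr h.symm]⟩
    · exact Or.inr (Or.inr ⟨hb, ha, h.symm⟩)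
  loopless := by constructor; rintro a ⟨h1, -⟩; exact h1 rfl

section helpers

variable {V : Type*} [Fintype V] [DecidableEq V]

lemma merge_adj (G : SimpleGraph V) (v u w a b : V) :
    (mergeNeighbors G v u w).Adj a b ↔ (a ≠ b ∧ a ≠ v ∧ b ≠ v ∧ a ≠ w ∧ b ≠ w ∧
    ((a = u ∧ (G.Adj u b ∨ G.Adj w b)) ∨ (b = u ∧ (G.Adj a u ∨ G.Adj a w)) ∨
      (a ≠ u ∧ b ≠ u ∧ G.Adj a b))) := Iff.rfl

omit [Fintype V] [DecidableEq V] in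
lemma matching_unique {G : SimpleGraph V} {M : Finset (Sym2 V)} (hM : IsMatching G M)
    {e f : Sym2 V} {x : V} (he : e ∈ M) (hf : f ∈ M) (hxe : x ∈ e) (hxf : x ∈ f) : e = f := by
  by_contra h
  exact hM.2 e he f hf h x hxe hxf

omit [Fintype V] [DecidableEq V] in
lemma matching_insert {G : SimpleGraph V} {M : Finset (Sym2 V)} {e₀ : Sym2 V} [DecidableEq (Sym2 V)]
    (hM : IsMatching G M) (he : e₀ ∈ G.edgeSet)
    (hdis : ∀ f ∈ M, ∀ x, x ∈ e₀ → x ∉ f) :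
    IsMatching G (insert e₀ M) ∧ (insert e₀ M).card = M.card + 1 := by
  have hnot : e₀ ∉ M := by
    intro h
    induction e₀ using Sym2.ind with
    | _ a b => exact hdis _ h a (Sym2.mem_mk_left a b) (Sym2.mem_mk_left a b)
  refine ⟨⟨?_, ?_⟩, Finset.card_insert_of_notMem hnot⟩
  · intro e hemem
    rcases Finset.mem_insert.1 hemem with rfl | h
    · exact he
    · exact hM.1 e h
  · intro e hemem f hfmem hef x hxe hxf
    rcases Finset.mem_insert.1 hemem with rfl | heM
    · rcases Finset.mem_insert.1 hfmem with rfl | hfM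
      · exact hef rfl
      · exact hdis f hfM x hxe hxf
    · rcases Finset.mem_insert.1 hfmem with rfl | hfM
      · exact hdis e heM x hxf hxe
      · exact hM.2 e heM f hfM hef x hxe hxf

lemma matchSet_bdd (G : SimpleGraph V) :
    BddAbove {n | ∃ M : Finset (Sym2 V), IsMatching G M ∧ M.card = n} := by
  refine ⟨Fintype.card (Sym2 V), ?_⟩
  rintro n ⟨M, -, rfl⟩
  exact (Finset.card_le_univ M).trans_eq Finset.card_univ

omit [Fintype V] [DecidableEq V] in
lemma matchSet_zero (G : SimpleGraph V) :
    (0 : ℕ) ∈ {n | ∃ M : Finset (Sym2 V), IsMatching G M ∧ M.card = n} :=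
  ⟨∅, ⟨by simp, by simp⟩, rfl⟩

lemma le_mm {G : SimpleGraph V} {M : Finset (Sym2 V)} (h : IsMatching G M) : M.card ≤ mm G :=
  le_csSup (matchSet_bdd G) ⟨M, h, rfl⟩

lemma exists_mm (G : SimpleGraph V) : ∃ M : Finset (Sym2 V), IsMatching G M ∧ M.card = mm G :=
  Nat.sSup_mem ⟨0, matchSet_zero G⟩ (matchSet_bdd G)

lemma le_dir (G : SimpleGraph V) (v u w : V) (huw : u ≠ w)
    (hnbrs : G.neighborSet v = {u, w}) (M : Finset (Sym2 V)) (hM : IsMatching G M) :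
    ∃ M' : Finset (Sym2 V), IsMatching (mergeNeighbors G v u w) M' ∧ M.card ≤ M'.card + 1 := by
  have hvu : G.Adj v u := by
    have : u ∈ G.neighborSet v := by rw [hnbrs]; exact Set.mem_insert u {w}
    exact this
  have hvw : G.Adj v w := by
    have : w ∈ G.neighborSet v := by rw [hnbrs]; exact Set.mem_insert_of_mem u rfl
    exact this
  have hvnu : v ≠ u := hvu.ne
  have hvnw : v ≠ w := hvw.ne
  -- every edge of G containing v is s(v,u) or s(v,w)
  have hEv : ∀ e ∈ G.edgeSet, v ∈ e → e = s(v, u) ∨ e = s(v, w) := by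
    intro e he hve
    induction e using Sym2.ind with
    | _ a b =>
      have hab : G.Adj a b := he
      rcases Sym2.mem_iff.1 hve with rfl | rfl
      · have hmem : b ∈ G.neighborSet v := hab
        rw [hnbrs] at hmem
        simp only [Set.mem_insert_iff, Set.mem_singleton_iff] at hmem
        rcases hmem with rfl | rfl
        · exact Or.inl rfl
        · exact Or.inr rfl
      · have hmem : a ∈ G.neighborSet v := hab.symm
        rw [hnbrs] at hmem
        simp only [Set.mem_insert_iff, Set.mem_singleton_iff] at hmem
        rcases hmem with rfl | rfl
        · exact Or.inl Sym2.eq_swap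
        · exact Or.inr Sym2.eq_swap
  by_cases hsw : s(v, w) ∈ M
  · -- case: s(v,w) ∈ M; take M' = M.erase s(v,w)
    refine ⟨M.erase s(v, w), ⟨?_, ?_⟩, ?_⟩
    · intro e he
      have heM : e ∈ M := Finset.mem_of_mem_erase he
      have hne : e ≠ s(v, w) := Finset.ne_of_mem_erase he
      have hnv : v ∉ e := fun hv => hne ((matching_unique hM heM hsw hv (Sym2.mem_mk_left v w)))
      have hnw : w ∉ e := fun hw => hne ((matching_unique hM heM hsw hw (Sym2.mem_mk_right v w)))
      induction e using Sym2.ind with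
      | _ a b =>
        have hab : G.Adj a b := hM.1 _ heM
        simp only [Sym2.mem_iff, not_or] at hnv hnw
        rw [SimpleGraph.mem_edgeSet, merge_adj]
        refine ⟨hab.ne, fun h => hnv.1 h.symm, fun h => hnv.2 h.symm,
          fun h => hnw.1 h.symm, fun h => hnw.2 h.symm, ?_⟩
        by_cases hau : a = u
        · exact Or.inl ⟨hau, Or.inl (hau ▸ hab)⟩
        by_cases hbu : b = u
        · exact Or.inr (Or.inl ⟨hbu, Or.inl (hbu ▸ hab)⟩)
        · exact Or.inr (Or.inr ⟨hau, hbu, hab⟩)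
    · intro e he f hf hef x hxe hxf
      exact hM.2 e (Finset.mem_of_mem_erase he) f (Finset.mem_of_mem_erase hf) hef x hxe hxf
    · rw [Finset.card_erase_of_mem hsw]
      have : 1 ≤ M.card := Finset.card_pos.2 ⟨_, hsw⟩
      omega
  by_cases hsu : s(v, u) ∈ M
  · -- case: s(v,u) ∈ M; erase it and map w ↦ u on the rest
    set r : V → V := fun x => if x = w then u else x with hr
    set M₀ : Finset (Sym2 V) := M.erase s(v, u) with hM₀
    have hM₀nu : ∀ e ∈ M₀, u ∉ e := by
      intro e he hu
      exact Finset.ne_of_mem_erase he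
        (matching_unique hM (Finset.mem_of_mem_erase he) hsu hu (Sym2.mem_mk_right v u))
    have hM₀nv : ∀ e ∈ M₀, v ∉ e := by
      intro e he hv
      exact Finset.ne_of_mem_erase he
        (matching_unique hM (Finset.mem_of_mem_erase he) hsu hv (Sym2.mem_mk_left v u))
    -- disjointness of images
    have hdisj : ∀ e ∈ M₀, ∀ f ∈ M₀, e ≠ f → ∀ x, x ∈ Sym2.map r e → x ∉ Sym2.map r f := by
      intro e he f hf hef x hxe hxf
      obtain ⟨a, hae, hax⟩ := Sym2.mem_map.1 hxe
      obtain ⟨c, hcf, hcx⟩ := Sym2.mem_map.1 hxf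
      have hanu : a ≠ u := fun h => hM₀nu e he (h ▸ hae)
      have hcnu : c ≠ u := fun h => hM₀nu f hf (h ▸ hcf)
      have hac : a = c := by
        by_cases haw : a = w <;> by_cases hcw : c = w
        · rw [haw, hcw]
        · exfalso; apply hcnu
          have : r a = u := by simp [hr, haw]
          have : r c = u := by rw [hcx, ← hax, this]
          simpa [hr, hcw] using this
        · exfalso; apply hanu
          have : r c = u := by simp [hr, hcw]
          have : r a = u := by rw [hax, ← hcx, this]
          simpa [hr, haw] using this
        · have h1 : r a = a := by simp [hr, haw]
          have h2 : r c = c := by simp [hr, hcw]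
          rw [← h1, ← h2, hax, hcx]
      exact hM.2 e (Finset.mem_of_mem_erase he) f (Finset.mem_of_mem_erase hf) hef a hae
        (hac ▸ hcf)
    refine ⟨M₀.image (Sym2.map r), ⟨?_, ?_⟩, ?_⟩
    · intro e' he'
      obtain ⟨e, heM₀, rfl⟩ := Finset.mem_image.1 he'
      have hnu := hM₀nu e heM₀
      have hnv := hM₀nv e heM₀
      have heM : e ∈ M := Finset.mem_of_mem_erase heM₀
      induction e using Sym2.ind with
      | _ a b =>
        have hab : G.Adj a b := hM.1 _ heM
        simp only [Sym2.mem_iff, not_or] at hnu hnv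
        obtain ⟨hanu, hbnu⟩ := hnu
        obtain ⟨hanv, hbnv⟩ := hnv
        rw [Sym2.map_pair_eq, SimpleGraph.mem_edgeSet, merge_adj]
        by_cases haw : a = w <;> by_cases hbw : b = w
        · exact absurd (haw.trans hbw.symm) hab.ne
        · have h1 : r a = u := by simp [hr, haw]
          have h2 : r b = b := by simp [hr, hbw]
          rw [h1, h2]
          refine ⟨hbnu, fun h => hvnu h.symm, fun h => hbnv h.symm,
            huw, hbw, Or.inl ⟨rfl, Or.inr (haw ▸ hab)⟩⟩
        · have h1 : r a = a := by simp [hr, haw]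
          have h2 : r b = u := by simp [hr, hbw]
          rw [h1, h2]
          refine ⟨fun h => hanu h.symm, fun h => hanv h.symm, fun h => hvnu h.symm, haw, huw,
            Or.inr (Or.inl ⟨rfl, Or.inr (hbw ▸ hab)⟩)⟩
        · have h1 : r a = a := by simp [hr, haw]
          have h2 : r b = b := by simp [hr, hbw]
          rw [h1, h2]
          exact ⟨hab.ne, fun h => hanv h.symm, fun h => hbnv h.symm, haw, hbw,
            Or.inr (Or.inr ⟨fun h => hanu h.symm, fun h => hbnu h.symm, hab⟩)⟩
    · intro e' he' f' hf' hef x hxe hxf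
      obtain ⟨e, heM₀, rfl⟩ := Finset.mem_image.1 he'
      obtain ⟨f, hfM₀, rfl⟩ := Finset.mem_image.1 hf'
      have : e ≠ f := fun h => hef (by rw [h])
      exact hdisj e heM₀ f hfM₀ this x hxe hxf
    · have hcard : (M₀.image (Sym2.map r)).card = M₀.card := by
        apply Finset.card_image_of_injOn
        intro e he f hf hmap
        by_contra hef
        induction e using Sym2.ind with
        | _ a b =>
          have hx : r a ∈ Sym2.map r s(a, b) := by
            rw [Sym2.map_pair_eq]; exact Sym2.mem_mk_left _ _
          exact hdisj _ he _ hf hef (r a) hx (hmap ▸ hx)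
      rw [hcard, hM₀, Finset.card_erase_of_mem hsu]
      have : 1 ≤ M.card := Finset.card_pos.2 ⟨_, hsu⟩
      omega
  · -- case: no edge of M contains v; take M' = M.filter (w ∉ ·)
    have hnv : ∀ e ∈ M, v ∉ e := by
      intro e he hv
      rcases hEv e (hM.1 e he) hv with rfl | rfl
      · exact hsu he
      · exact hsw he
    refine ⟨M.filter (fun e => w ∉ e), ⟨?_, ?_⟩, ?_⟩
    · intro e he
      obtain ⟨heM, hnw⟩ := Finset.mem_filter.1 he
      have hnv' := hnv e heM
      induction e using Sym2.ind with
      | _ a b =>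
        have hab : G.Adj a b := hM.1 _ heM
        simp only [Sym2.mem_iff, not_or] at hnw hnv'
        rw [SimpleGraph.mem_edgeSet, merge_adj]
        refine ⟨hab.ne, fun h => hnv'.1 h.symm, fun h => hnv'.2 h.symm,
          fun h => hnw.1 h.symm, fun h => hnw.2 h.symm, ?_⟩
        by_cases hau : a = u
        · exact Or.inl ⟨hau, Or.inl (hau ▸ hab)⟩
        by_cases hbu : b = u
        · exact Or.inr (Or.inl ⟨hbu, Or.inl (hbu ▸ hab)⟩)
        · exact Or.inr (Or.inr ⟨hau, hbu, hab⟩)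
    · intro e he f hf hef x hxe hxf
      exact hM.2 e (Finset.mem_filter.1 he).1 f (Finset.mem_filter.1 hf).1 hef x hxe hxf
    · have hsplit := Finset.card_filter_add_card_filter_not
        (s := M) (p := fun e => w ∉ e)
      have hle1 : (M.filter (fun e => ¬ w ∉ e)).card ≤ 1 := by
        apply Finset.card_le_one.2
        intro e he f hf
        obtain ⟨heM, hwe⟩ := Finset.mem_filter.1 he
        obtain ⟨hfM, hwf⟩ := Finset.mem_filter.1 hf
        exact matching_unique hM heM hfM (not_not.1 hwe) (not_not.1 hwf)
      omega

lemma ge_dir (G : SimpleGraph V) (v u w : V) (huw : u ≠ w)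
    (hnbrs : G.neighborSet v = {u, w}) (M' : Finset (Sym2 V))
    (hM' : IsMatching (mergeNeighbors G v u w) M') :
    ∃ M : Finset (Sym2 V), IsMatching G M ∧ M.card = M'.card + 1 := by
  have hvu : G.Adj v u := by
    have : u ∈ G.neighborSet v := by rw [hnbrs]; exact Set.mem_insert u {w}
    exact this
  have hvw : G.Adj v w := by
    have : w ∈ G.neighborSet v := by rw [hnbrs]; exact Set.mem_insert_of_mem u rfl
    exact this
  have hvnu : v ≠ u := hvu.ne
  have hvnw : v ≠ w := hvw.ne
  -- every edge of M' avoids v and w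
  have hav : ∀ e ∈ M', v ∉ e ∧ w ∉ e := by
    intro e he
    have := hM'.1 e he
    induction e using Sym2.ind with
    | _ a b =>
      obtain ⟨-, h2, h3, h4, h5, -⟩ := (merge_adj G v u w a b).1 this
      constructor
      · simp only [Sym2.mem_iff, not_or]
        exact ⟨fun h => h2 h.symm, fun h => h3 h.symm⟩
      · simp only [Sym2.mem_iff, not_or]
        exact ⟨fun h => h4 h.symm, fun h => h5 h.symm⟩
  by_cases hu : ∃ e₀ ∈ M', u ∈ e₀
  · obtain ⟨e₀, he₀, hue₀⟩ := hu
    obtain ⟨b, hb⟩ := Sym2.mem_iff_exists.1 hue₀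
    subst hb
    have hadj : (mergeNeighbors G v u w).Adj u b := hM'.1 _ he₀
    obtain ⟨hub, -, hbv, -, hbw, hdis⟩ := (merge_adj G v u w u b).1 hadj
    have hGub : G.Adj u b ∨ G.Adj w b := by
      rcases hdis with ⟨-, h⟩ | ⟨h, -⟩ | ⟨h, -, -⟩
      · exact h
      · exact absurd h.symm hub
      · exact absurd rfl h
    -- edges of M' other than e₀ avoid u and are G-edges
    have hrest : ∀ e ∈ M', e ≠ s(u, b) → u ∉ e ∧ e ∈ G.edgeSet := by
      intro e he hne
      have hnu : u ∉ e := fun h => hne (matching_unique hM' he he₀ h (Sym2.mem_mk_left u b))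
      refine ⟨hnu, ?_⟩
      have := hM'.1 e he
      induction e using Sym2.ind with
      | _ a c =>
        obtain ⟨-, -, -, -, -, hd⟩ := (merge_adj G v u w a c).1 this
        simp only [Sym2.mem_iff, not_or] at hnu
        rcases hd with ⟨h, -⟩ | ⟨h, -⟩ | ⟨-, -, h⟩
        · exact absurd h.symm hnu.1
        · exact absurd h.symm hnu.2
        · exact h
    rcases hGub with hG1 | hG2
    · -- G.Adj u b : add s(v,w)
      have hins := matching_insert (M := M') (e₀ := s(v, w)) ?hm hvw ?hd
      case hm =>
        refine ⟨?_, hM'.2⟩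
        intro e he
        by_cases hne : e = s(u, b)
        · subst hne; exact hG1
        · exact (hrest e he hne).2
      case hd =>
        intro f hf x hx
        rcases Sym2.mem_iff.1 hx with rfl | rfl
        · exact (hav f hf).1
        · exact (hav f hf).2
      exact ⟨insert s(v, w) M', hins.1, hins.2⟩
    · -- G.Adj w b : replace s(u,b) by s(w,b) and add s(v,u)
      set M₀ : Finset (Sym2 V) := M'.erase s(u, b) with hM₀
      have hM₀G : IsMatching G M₀ := by
        constructor
        · intro e he
          exact (hrest e (Finset.mem_of_mem_erase he) (Finset.ne_of_mem_erase he)).2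
        · intro e he f hf hef x hxe hxf
          exact hM'.2 e (Finset.mem_of_mem_erase he) f (Finset.mem_of_mem_erase hf) hef x hxe hxf
      have hbM₀ : ∀ e ∈ M₀, b ∉ e := by
        intro e he hb
        exact Finset.ne_of_mem_erase he
          (matching_unique hM' (Finset.mem_of_mem_erase he) he₀ hb (Sym2.mem_mk_right u b))
      have huM₀ : ∀ e ∈ M₀, u ∉ e := by
        intro e he
        exact (hrest e (Finset.mem_of_mem_erase he) (Finset.ne_of_mem_erase he)).1
      have hins1 := matching_insert (M := M₀) (e₀ := s(w, b)) hM₀G hG2 ?hd1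
      case hd1 =>
        intro f hf x hx
        rcases Sym2.mem_iff.1 hx with rfl | rfl
        · exact (hav f (Finset.mem_of_mem_erase hf)).2
        · exact hbM₀ f hf
      have hins2 := matching_insert (M := insert s(w, b) M₀) (e₀ := s(v, u)) hins1.1 hvu ?hd2
      case hd2 =>
        intro f hf x hx
        rcases Finset.mem_insert.1 hf with rfl | hfM₀
        · rcases Sym2.mem_iff.1 hx with rfl | rfl
          · simp only [Sym2.mem_iff, not_or]
            exact ⟨hvnw, fun h => hbv h.symm⟩
          · simp only [Sym2.mem_iff, not_or]
            exact ⟨huw, hub⟩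
        · rcases Sym2.mem_iff.1 hx with rfl | rfl
          · exact (hav f (Finset.mem_of_mem_erase hfM₀)).1
          · exact huM₀ f hfM₀
      refine ⟨insert s(v, u) (insert s(w, b) M₀), hins2.1, ?_⟩
      rw [hins2.2, hins1.2, hM₀, Finset.card_erase_of_mem he₀]
      have : 1 ≤ M'.card := Finset.card_pos.2 ⟨_, he₀⟩
      omega
  · -- no edge contains u: add s(v,u)
    push_neg at hu
    have hins := matching_insert (M := M') (e₀ := s(v, u)) ?hm hvu ?hd
    case hm =>
      refine ⟨?_, hM'.2⟩
      intro e he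
      have hnu := hu e he
      have := hM'.1 e he
      induction e using Sym2.ind with
      | _ a c =>
        obtain ⟨-, -, -, -, -, hd⟩ := (merge_adj G v u w a c).1 this
        simp only [Sym2.mem_iff, not_or] at hnu
        rcases hd with ⟨h, -⟩ | ⟨h, -⟩ | ⟨-, -, h⟩
        · exact absurd h.symm hnu.1
        · exact absurd h.symm hnu.2
        · exact h
    case hd =>
      intro f hf x hx
      rcases Sym2.mem_iff.1 hx with rfl | rfl
      · exact (hav f hf).1
      · exact fun h => hu f hf h
    exact ⟨insert s(v, u) M', hins.1, hins.2⟩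

end helpers

/-- If `v` is a vertex of degree 2 with neighbors `u` and `w`, then the maximum
matching size of `G` equals the maximum matching size of the graph obtained by
deleting `v` and merging `u` and `w`, plus one. -/
theorem stmt1 {V : Type*} [Fintype V] [DecidableEq V] (G : SimpleGraph V)
    (v u w : V) (huw : u ≠ w) (hnbrs : G.neighborSet v = {u, w}) :
    mm G = mm (mergeNeighbors G v u w) + 1 := by

  obtain ⟨M, hM, hMc⟩ := exists_mm G
  obtain ⟨M', hM', hM'c⟩ := exists_mm (mergeNeighbors G v u w)
  obtain ⟨N', hN', hle⟩ := le_dir G v u w huw hnbrs M hM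
  obtain ⟨N, hN, hNc⟩ := ge_dir G v u w huw hnbrs M' hM'
  have h1 : mm G ≤ mm (mergeNeighbors G v u w) + 1 := by
    have := le_mm hN'
    omega
  have h2 : mm (mergeNeighbors G v u w) + 1 ≤ mm G := by
    have := le_mm hN
    omega
  omega
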